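/- Let d ≥ 1, let D ∈ ℝ^{d×d} be a diagonal positive semidefinite matrix with largest diagonal entry D_max, and let n ≥ 1 be a real number. Then for every x ∈ ℝ^d with ‖x‖ = 1, we have exp(−D_max²/(2n)) ≤ (xᵀ(I + D/n)x)^n / exp(xᵀDx) ≤ 1. -/

import Mathlib

open Matrix Real

lemma log_aux (t : ℝ) (ht : 0 ≤ t) : t - t ^ 2 / 2 ≤ Real.log (1 + t) := by
  set f : ℝ → ℝ := fun u => Real.log (1 + u) - u + u ^ 2 / 2 with hf
  have hder : ∀ u : ℝ, 0 ≤ u → HasDerivAt f ((1 + u)⁻¹ - 1 + u) u := by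
    intro u hu
    have h1 : (1 : ℝ) + u ≠ 0 := by positivity
    have hlog : HasDerivAt (fun u : ℝ => Real.log (1 + u)) ((1 + u)⁻¹) u := by
      have h := ((hasDerivAt_id u).const_add 1).log h1
      simpa using h
    have hsq : HasDerivAt (fun u : ℝ => u ^ 2 / 2) u u := by
      have h := (hasDerivAt_pow 2 u).div_const 2
      norm_num at h
      simpa using h
    rw [hf]
    exact (hlog.sub (hasDerivAt_id' u)).add hsq
  have hmono : MonotoneOn f (Set.Ici (0 : ℝ)) := by
    apply monotoneOn_of_deriv_nonneg (convex_Ici 0)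
    · intro u hu
      exact ((hder u hu).differentiableAt).continuousAt.continuousWithinAt
    · intro u hu
      rw [interior_Ici] at hu
      exact ((hder u (le_of_lt hu)).differentiableAt).differentiableWithinAt
    · intro u hu
      rw [interior_Ici] at hu
      have hu' : 0 < u := hu
      rw [(hder u hu'.le).deriv]
      have h1 : (0:ℝ) < 1 + u := by linarith
      have h2 : (1 + u)⁻¹ - 1 + u = u ^ 2 / (1 + u) := by
        field_simp; ring
      rw [h2]; positivity
  have h0 : f 0 ≤ f t := hmono Set.self_mem_Ici ht ht
  simp [hf] at h0
  linarith

theorem stmt_1 (d : ℕ) (hd : 1 ≤ d) (D : Matrix (Fin d) (Fin d) ℝ)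
    (hdiag : D.IsDiag) (hpsd : ∀ i, 0 ≤ D i i)
    (Dmax : ℝ) (hle : ∀ i, D i i ≤ Dmax) (hmem : ∃ i, D i i = Dmax)
    (n : ℝ) (hn : 1 ≤ n)
    (x : EuclideanSpace ℝ (Fin d)) (hx : ‖x‖ = 1) :
    Real.exp (-Dmax ^ 2 / (2 * n)) ≤
        (x ⬝ᵥ ((1 + n⁻¹ • D) *ᵥ x)) ^ n / Real.exp (x ⬝ᵥ (D *ᵥ x)) ∧
      (x ⬝ᵥ ((1 + n⁻¹ • D) *ᵥ x)) ^ n / Real.exp (x ⬝ᵥ (D *ᵥ x)) ≤ 1 := by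
  have hn0 : (0:ℝ) < n := lt_of_lt_of_le one_pos hn
  -- D *ᵥ x is componentwise
  have hmul : D *ᵥ x = fun i => D i i * x i := by
    funext i
    rw [Matrix.mulVec, dotProduct]
    exact Finset.sum_eq_single i (fun j _ hj => by rw [hdiag (Ne.symm hj), zero_mul])
      (fun h => absurd (Finset.mem_univ i) h)
  set s : ℝ := x ⬝ᵥ (D *ᵥ x) with hsdef
  have hs : s = ∑ i, D i i * x i ^ 2 := by
    rw [hsdef, hmul, dotProduct]
    exact Finset.sum_congr rfl (fun i _ => by ring)
  have hsum : ∑ i, x i ^ 2 = 1 := by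
    have h := EuclideanSpace.norm_eq x
    rw [hx] at h
    have h2 : Real.sqrt (∑ i, ‖x i‖ ^ 2) = 1 := h.symm
    have h3 : (∑ i, ‖x i‖ ^ 2) = 1 := Real.sqrt_eq_one.mp h2
    simpa [sq_abs, Real.norm_eq_abs] using h3
  have hs0 : 0 ≤ s := by
    rw [hs]
    exact Finset.sum_nonneg fun i _ => mul_nonneg (hpsd i) (sq_nonneg _)
  have hDmax0 : 0 ≤ Dmax := by
    obtain ⟨i, hi⟩ := hmem
    exact hi ▸ hpsd i
  have hsmax : s ≤ Dmax := by
    rw [hs]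
    calc ∑ i, D i i * x i ^ 2 ≤ ∑ i, Dmax * x i ^ 2 :=
          Finset.sum_le_sum fun i _ => mul_le_mul_of_nonneg_right (hle i) (sq_nonneg _)
      _ = Dmax := by rw [← Finset.mul_sum, hsum, mul_one]
  -- quadratic form value
  have hqf : x ⬝ᵥ ((1 + n⁻¹ • D) *ᵥ x) = 1 + s / n := by
    rw [Matrix.add_mulVec, Matrix.one_mulVec, Matrix.smul_mulVec, dotProduct_add,
      dotProduct_smul]
    have hxx : x ⬝ᵥ x = 1 := by
      rw [dotProduct]
      rw [← hsum]
      exact Finset.sum_congr rfl fun i _ => (sq (x i)).symm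
    rw [hxx, ← hsdef]
    rw [smul_eq_mul, div_eq_inv_mul]
  set b : ℝ := 1 + s / n with hb
  have hb0 : 0 < b := by positivity
  have ht0 : 0 ≤ s / n := by positivity
  -- upper bound
  have hupper : b ^ n ≤ Real.exp s := by
    have h1 : b ≤ Real.exp (s / n) := by
      have := Real.add_one_le_exp (s / n)
      linarith
    calc b ^ n ≤ (Real.exp (s / n)) ^ n :=
          Real.rpow_le_rpow (le_of_lt hb0) h1 (le_of_lt hn0)
      _ = Real.exp s := by
          rw [← Real.exp_mul]
          rw [div_mul_cancel₀ _ (ne_of_gt hn0)]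
  -- lower bound
  have hlower : Real.exp (s - Dmax ^ 2 / (2 * n)) ≤ b ^ n := by
    have h1 : Real.exp (s / n - (s / n) ^ 2 / 2) ≤ b := by
      have hl := log_aux (s / n) ht0
      calc Real.exp (s / n - (s / n) ^ 2 / 2) ≤ Real.exp (Real.log (1 + s / n)) :=
            Real.exp_le_exp.mpr hl
        _ = b := by rw [Real.exp_log hb0]
    have h2 : (Real.exp (s / n - (s / n) ^ 2 / 2)) ^ n ≤ b ^ n :=
      Real.rpow_le_rpow (le_of_lt (Real.exp_pos _)) h1 (le_of_lt hn0)
    have h3 : (Real.exp (s / n - (s / n) ^ 2 / 2)) ^ n = Real.exp (s - s ^ 2 / (2 * n)) := by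
      rw [← Real.exp_mul]
      congr 1
      field_simp
    rw [h3] at h2
    have h4 : Real.exp (s - Dmax ^ 2 / (2 * n)) ≤ Real.exp (s - s ^ 2 / (2 * n)) := by
      apply Real.exp_le_exp.mpr
      have : s ^ 2 ≤ Dmax ^ 2 := pow_le_pow_left₀ hs0 hsmax 2
      have hd2 : s ^ 2 / (2 * n) ≤ Dmax ^ 2 / (2 * n) := by
        apply div_le_div_of_nonneg_right this  -- maybe wrong name
        positivity
      linarith
    linarith
  rw [hqf]
  have hes : 0 < Real.exp s := Real.exp_pos s
  constructor
  · rw [le_div_iff₀ hes]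
    calc Real.exp (-Dmax ^ 2 / (2 * n)) * Real.exp s
        = Real.exp (s - Dmax ^ 2 / (2 * n)) := by
          rw [← Real.exp_add]; ring_nf
      _ ≤ b ^ n := hlower
  · rw [div_le_one hes]
    exact hupper
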